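/- If α(X) ∈ E_n(R[X]) (resp. the elementary quadratic group EQ_{2n}(R[X],Λ[X])) satisfies α(0) = I, then α(X) is a product of elements of the form ε·g(Xf(X))·ε⁻¹, where ε is an elementary generator with constant entries (over R) and g(Xf(X)) is an elementary generator congruent to the identity modulo (X). -/

import Mathlib

open Matrix Polynomial

namespace ElemDecompAux

variable {R : Type*} [CommRing R] {m : ℕ}

def constGen (R : Type*) [CommRing R] (m : ℕ) :
    Set (Matrix (Fin m) (Fin m) (Polynomial R)) :=
  {N | ∃ (i j : Fin m) (a : R), i ≠ j ∧ N = 1 + Matrix.single i j (Polynomial.C a)}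

def conjGen (R : Type*) [CommRing R] (m : ℕ) :
    Set (Matrix (Fin m) (Fin m) (Polynomial R)) :=
  {M | ∃ ε ε' : Matrix (Fin m) (Fin m) (Polynomial R),
      ε ∈ Submonoid.closure (constGen R m) ∧
      ε * ε' = 1 ∧ ε' * ε = 1 ∧
      ∃ (i j : Fin m) (f : Polynomial R), i ≠ j ∧
        M = ε * (1 + Matrix.single i j (Polynomial.X * f)) * ε'}

lemma elem_mul {i j : Fin m} (hij : i ≠ j) (a b : Polynomial R) :
    (1 + single i j a) * (1 + single i j b)
      = 1 + single i j (a + b) := by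
  have h0 : single i j a * single i j b = 0 :=
    Matrix.single_mul_single_of_ne (c := a) i j i (Ne.symm hij) b
  rw [add_mul, mul_add, mul_add, one_mul, mul_one, h0, Matrix.single_add, one_mul]
  abel

lemma map_elem {A S : Type*} [CommRing A] [CommRing S] (φ : A →+* S)
    {i j : Fin m} (a : A) :
    (1 + single i j a).map φ = 1 + single i j (φ a) := by
  ext k l
  simp [Matrix.map_apply, Matrix.add_apply, Matrix.one_apply, Matrix.single,
    Matrix.of_apply, apply_ite φ]

lemma conj_mem {δ β β' : Matrix (Fin m) (Fin m) (Polynomial R)}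
    (hδ : δ ∈ Submonoid.closure (conjGen R m))
    (hβ : β ∈ Submonoid.closure (constGen R m))
    (h1 : β * β' = 1) (h2 : β' * β = 1) :
    β * δ * β' ∈ Submonoid.closure (conjGen R m) := by
  induction hδ using Submonoid.closure_induction with
  | one => simpa [h1] using Submonoid.one_mem _
  | mem x hx =>
      obtain ⟨ε, ε', hε, he1, he2, i, j, f, hij, rfl⟩ := hx
      refine Submonoid.subset_closure ⟨β * ε, ε' * β', Submonoid.mul_mem _ hβ hε, ?_, ?_,
        i, j, f, hij, by noncomm_ring⟩
      · calc β * ε * (ε' * β') = β * (ε * ε') * β' := by noncomm_ring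
          _ = 1 := by rw [he1, mul_one, h1]
      · calc ε' * β' * (β * ε) = ε' * (β' * β) * ε := by noncomm_ring
          _ = 1 := by rw [h2, mul_one, he2]
  | mul x y hx hy ihx ihy =>
      have : β * (x * y) * β' = (β * x * β') * (β * y * β') := by
        calc β * (x * y) * β' = β * x * 1 * (y * β') := by noncomm_ring
          _ = β * x * (β' * β) * (y * β') := by rw [h2]
          _ = (β * x * β') * (β * y * β') := by noncomm_ring
      rw [this]; exact Submonoid.mul_mem _ ihx ihy

lemma main (α : Matrix (Fin m) (Fin m) (Polynomial R))
    (hα : α ∈ Submonoid.closure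
      {M : Matrix (Fin m) (Fin m) (Polynomial R) |
        ∃ (i j : Fin m) (f : Polynomial R), i ≠ j ∧
          M = 1 + Matrix.single i j f}) :
    ∃ β β' : Matrix (Fin m) (Fin m) (Polynomial R),
      β ∈ Submonoid.closure (constGen R m) ∧ β * β' = 1 ∧ β' * β = 1 ∧
      β = (α.map (Polynomial.eval 0)).map Polynomial.C ∧
      α * β' ∈ Submonoid.closure (conjGen R m) := by
  induction hα using Submonoid.closure_induction with
  | one =>
      refine ⟨1, 1, Submonoid.one_mem _, one_mul 1, one_mul 1, ?_, ?_⟩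
      · simp [Matrix.map_one]
      · simpa using Submonoid.one_mem _
  | mem x hx =>
      obtain ⟨i, j, f, hij, rfl⟩ := hx
      set c : R := f.eval 0 with hc
      refine ⟨1 + single i j (Polynomial.C c),
        1 + single i j (-Polynomial.C c),
        Submonoid.subset_closure ⟨i, j, c, hij, rfl⟩, ?_, ?_, ?_, ?_⟩
      · rw [elem_mul hij]; simp
      · rw [elem_mul hij]; simp
      · rw [← Polynomial.coe_evalRingHom, map_elem (Polynomial.evalRingHom (0 : R)),
          map_elem (Polynomial.C : R →+* Polynomial R)]
        simp [hc]
      · rw [elem_mul hij]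
        have hf : f + -Polynomial.C c = Polynomial.X * f.divX := by
          have := Polynomial.X_mul_divX_add (p := f)
          rw [Polynomial.coeff_zero_eq_eval_zero] at this
          linear_combination -this
        rw [hf]
        exact Submonoid.subset_closure
          ⟨1, 1, Submonoid.one_mem _, one_mul 1, one_mul 1, i, j, f.divX, hij,
            by rw [one_mul, mul_one]⟩
  | mul x y hx hy ihx ihy =>
      obtain ⟨βa, βa', ha1, ha2, ha3, ha4, ha5⟩ := ihx
      obtain ⟨βb, βb', hb1, hb2, hb3, hb4, hb5⟩ := ihy
      refine ⟨βa * βb, βb' * βa', Submonoid.mul_mem _ ha1 hb1, ?_, ?_, ?_, ?_⟩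
      · calc βa * βb * (βb' * βa') = βa * (βb * βb') * βa' := by noncomm_ring
          _ = 1 := by rw [hb2, mul_one, ha2]
      · calc βb' * βa' * (βa * βb) = βb' * (βa' * βa) * βb := by noncomm_ring
          _ = 1 := by rw [ha3, mul_one, hb3]
      · have : ((x * y).map (Polynomial.eval 0)).map Polynomial.C
            = (x.map (Polynomial.eval 0)).map Polynomial.C
              * (y.map (Polynomial.eval 0)).map Polynomial.C := by
          rw [← Polynomial.coe_evalRingHom, Matrix.map_mul (f := Polynomial.evalRingHom 0),
            Matrix.map_mul (f := (Polynomial.C : R →+* Polynomial R)), Polynomial.coe_evalRingHom]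
        rw [this, ← ha4, ← hb4]
      · have hxy : x * y * (βb' * βa') = (x * βa') * (βa * (y * βb') * βa') := by
          calc x * y * (βb' * βa') = x * (βa' * βa) * (y * βb') * βa' := by
                rw [ha3]; noncomm_ring
            _ = (x * βa') * (βa * (y * βb') * βa') := by noncomm_ring
        rw [hxy]
        exact Submonoid.mul_mem _ ha5 (conj_mem hb5 ha1 ha2 ha3)

end ElemDecompAux

/-- If `α(X) ∈ E_m(R[X])` and `α(0) = I`, then `α(X)` is a product of elements
`ε·e_{ij}(X·f(X))·ε⁻¹` with `ε ∈ E_m(R)` (constant entries) and `e_{ij}(X·f(X)) ≡ I mod (X)`. -/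
theorem elementary_polynomial_decomposition {R : Type*} [CommRing R] (m : ℕ)
    (α : Matrix (Fin m) (Fin m) (Polynomial R))
    (hα : α ∈ Submonoid.closure
      {M : Matrix (Fin m) (Fin m) (Polynomial R) |
        ∃ (i j : Fin m) (f : Polynomial R), i ≠ j ∧
          M = 1 + Matrix.single i j f})
    (h0 : α.map (Polynomial.eval 0) = 1) :
    α ∈ Submonoid.closure
      {M : Matrix (Fin m) (Fin m) (Polynomial R) |
        ∃ ε ε' : Matrix (Fin m) (Fin m) (Polynomial R),
          ε ∈ Submonoid.closure
            {N : Matrix (Fin m) (Fin m) (Polynomial R) |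
              ∃ (i j : Fin m) (a : R), i ≠ j ∧
                N = 1 + Matrix.single i j (Polynomial.C a)} ∧
          ε * ε' = 1 ∧ ε' * ε = 1 ∧
          ∃ (i j : Fin m) (f : Polynomial R), i ≠ j ∧
            M = ε * (1 + Matrix.single i j (Polynomial.X * f)) * ε'} := by
  obtain ⟨β, β', hβ, h1, h2, h4, h5⟩ := ElemDecompAux.main α hα
  have hβ1 : β = 1 := by rw [h4, h0]; simp [Matrix.map_one]
  have hβ'1 : β' = 1 := by rw [hβ1, one_mul] at h1; exact h1
  rw [hβ'1, mul_one] at h5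
  exact h5
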